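/- Let c > 0, h > 0. Then (1/12)·h³·(c + c²) · ∑_{k ≥ ⌈8/(ch)⌉} e^{2kh - c·e^{kh}} ≤ (e^{-4}(1+c)/3) · e^{-c/2} · h², provided ch ≤ 2. -/
import Mathlib

set_option maxHeartbeats 1000000


theorem case1_bound (c h : ℝ) (hc : 0 < c) (hh : 0 < h) (hch : c * h ≤ 2) :
    (1 / 12) * h ^ 3 * (c + c ^ 2) *
      (∑' n : ℕ, Real.exp (2 * ((⌈8 / (c * h)⌉ : ℝ) + (n : ℝ)) * h -
        c * Real.exp (((⌈8 / (c * h)⌉ : ℝ) + (n : ℝ)) * h))) ≤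
      (Real.exp (-4) * (1 + c) / 3) * Real.exp (-c / 2) * h ^ 2 := by
  set K : ℝ := ((⌈8 / (c * h)⌉ : ℤ) : ℝ) with hKdef
  have hch0 : 0 < c * h := mul_pos hc hh
  have hKge : 8 / (c * h) ≤ K := Int.le_ceil _
  have hK8 : 8 ≤ K * (c * h) := (div_le_iff₀ hch0).mp hKge
  have hKh : 8 / c ≤ K * h := by
    rw [div_le_iff₀ hc]; nlinarith
  have hK0 : 0 ≤ K := le_trans (by positivity) hKge
  set r : ℝ := Real.exp (-(c * h / 2)) with hrdef
  have hr1 : r < 1 := Real.exp_lt_one_iff.mpr (by linarith)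
  have hr0 : 0 ≤ r := Real.exp_nonneg _
  set a : ℝ := Real.exp (-c / 2 - c / 2 * (K * h)) with hadef
  have ha0 : 0 ≤ a := Real.exp_nonneg _
  have hterm : ∀ n : ℕ,
      Real.exp (2 * (K + (n : ℝ)) * h - c * Real.exp ((K + (n : ℝ)) * h)) ≤ a * r ^ n := by
    intro n
    have hn0 : (0:ℝ) ≤ n := Nat.cast_nonneg n
    set x : ℝ := (K + (n : ℝ)) * h with hxdef
    have hx : 8 / c ≤ x := by
      have : K * h ≤ x := by rw [hxdef]; nlinarith
      linarith
    have hx0 : 0 ≤ x := le_trans (by positivity) hx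
    have hx8 : 8 ≤ c * x := by
      have := (div_le_iff₀ hc).mp hx; nlinarith
    have h1 : 1 + x / 2 ≤ Real.exp (x / 2) := by
      have := Real.add_one_le_exp (x / 2); linarith
    have hsq : (1 + x / 2) ^ 2 ≤ Real.exp x := by
      have h2 : (0:ℝ) ≤ 1 + x / 2 := by linarith
      have h3 : (1 + x / 2) ^ 2 ≤ (Real.exp (x / 2)) ^ 2 := by nlinarith
      have h4 : (Real.exp (x / 2)) ^ 2 = Real.exp x := by
        rw [← Real.exp_nat_mul]; congr 1; push_cast; ring
      linarith
    have key : 2 * x - c * Real.exp x ≤ -c / 2 - c / 2 * (K * h) - c * h / 2 * n := by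
      have hexp : c + c * x + c * x ^ 2 / 4 ≤ c * Real.exp x := by nlinarith
      have hxsplit : x = K * h + n * h := by rw [hxdef]; ring
      nlinarith
    have hrw : 2 * (K + (n : ℝ)) * h - c * Real.exp x = 2 * x - c * Real.exp x := by
      rw [hxdef]; ring
    rw [hrw]
    calc Real.exp (2 * x - c * Real.exp x)
        ≤ Real.exp (-c / 2 - c / 2 * (K * h) - c * h / 2 * n) := Real.exp_le_exp.mpr key
      _ = a * r ^ n := by
          rw [hadef, hrdef, ← Real.exp_nat_mul, ← Real.exp_add]
          congr 1; ring
  have hgsum : Summable (fun n : ℕ => a * r ^ n) :=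
    (summable_geometric_of_lt_one hr0 hr1).mul_left a
  have hfsum : Summable (fun n : ℕ =>
      Real.exp (2 * (K + (n : ℝ)) * h - c * Real.exp ((K + (n : ℝ)) * h))) :=
    Summable.of_nonneg_of_le (fun n => Real.exp_nonneg _) hterm hgsum
  have hS : (∑' n : ℕ, Real.exp (2 * (K + (n : ℝ)) * h - c * Real.exp ((K + (n : ℝ)) * h)))
      ≤ a * (1 - r)⁻¹ := by
    calc (∑' n : ℕ, Real.exp (2 * (K + (n : ℝ)) * h - c * Real.exp ((K + (n : ℝ)) * h)))
        ≤ ∑' n : ℕ, a * r ^ n := Summable.tsum_le_tsum hterm hfsum hgsum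
      _ = a * (1 - r)⁻¹ := by
          rw [tsum_mul_left, tsum_geometric_of_lt_one hr0 hr1]
  have hC0 : 0 ≤ (1 / 12) * h ^ 3 * (c + c ^ 2) := by positivity
  have h1r : c * h / 4 ≤ 1 - r := by
    have ht : c * h / 2 ≤ 1 := by linarith
    have h1 : 1 + c * h / 2 ≤ Real.exp (c * h / 2) := by
      have := Real.add_one_le_exp (c * h / 2); linarith
    have hpos : (0:ℝ) < 1 + c * h / 2 := by linarith
    have h2 : r ≤ (1 + c * h / 2)⁻¹ := by
      rw [hrdef, Real.exp_neg]
      exact inv_anti₀ hpos h1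
    have h3 : (1 + c * h / 2)⁻¹ ≤ 1 - c * h / 4 := by
      rw [inv_le_iff_one_le_mul₀ hpos]
      nlinarith
    linarith
  have h1rpos : 0 < 1 - r := by nlinarith
  have hinv : (1 - r)⁻¹ ≤ 4 / (c * h) := by
    rw [inv_le_iff_one_le_mul₀ h1rpos, div_mul_eq_mul_div, le_div_iff₀ hch0]
    linarith [h1r]
  have ha : a ≤ Real.exp (-c / 2) * Real.exp (-4) := by
    rw [hadef, ← Real.exp_add]
    apply Real.exp_le_exp.mpr
    have : 4 ≤ c / 2 * (K * h) := by nlinarith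
    linarith
  have hfinal : a * (1 - r)⁻¹ ≤ Real.exp (-c / 2) * Real.exp (-4) * (4 / (c * h)) := by
    have h4 : (0:ℝ) ≤ (1 - r)⁻¹ := le_of_lt (inv_pos.mpr h1rpos)
    have h5 : (0:ℝ) ≤ Real.exp (-c / 2) * Real.exp (-4) := by positivity
    calc a * (1 - r)⁻¹ ≤ Real.exp (-c / 2) * Real.exp (-4) * (1 - r)⁻¹ :=
          mul_le_mul_of_nonneg_right ha h4
      _ ≤ Real.exp (-c / 2) * Real.exp (-4) * (4 / (c * h)) :=
          mul_le_mul_of_nonneg_left hinv h5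
  calc (1 / 12) * h ^ 3 * (c + c ^ 2) *
        (∑' n : ℕ, Real.exp (2 * (K + (n : ℝ)) * h - c * Real.exp ((K + (n : ℝ)) * h)))
      ≤ (1 / 12) * h ^ 3 * (c + c ^ 2) * (a * (1 - r)⁻¹) :=
        mul_le_mul_of_nonneg_left hS hC0
    _ ≤ (1 / 12) * h ^ 3 * (c + c ^ 2) * (Real.exp (-c / 2) * Real.exp (-4) * (4 / (c * h))) :=
        mul_le_mul_of_nonneg_left hfinal hC0
    _ = (Real.exp (-4) * (1 + c) / 3) * Real.exp (-c / 2) * h ^ 2 := by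
        field_simp
        ring
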